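/- For all x ∈ ℝ and all μ ∈ ℝ, the partial derivative of f_μ(x) with respect to x equals −((x−μ)/σ²)·f_μ(x) − f_μ(x)·Σ_{i=1}^k (l(x,b_i) − l(x,a_i)). -/

import Mathlib

open MeasureTheory ProbabilityTheory Set Filter Topology

noncomputable def stdphi (x : ℝ) : ℝ := Real.exp (-(x ^ 2) / 2) / Real.sqrt (2 * Real.pi)

noncomputable def stdPhi (x : ℝ) : ℝ := ∫ t in Iic x, stdphi t

noncomputable def stdPhiInv : ℝ → ℝ := Function.invFun stdPhi

noncomputable def stdPhiE (c : EReal) (x s : ℝ) : ℝ :=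
  if c = ⊤ then 1 else if c = ⊥ then 0 else stdPhi ((c.toReal - x) / s)

def truncOrdered {k : ℕ} (a b : Fin k → EReal) : Prop :=
  (∀ i, a i < b i) ∧ ∀ i j : Fin k, i < j → b i < a j

def truncSet {k : ℕ} (a b : Fin k → EReal) : Set ℝ :=
  {x : ℝ | ∃ i, a i < (x : EReal) ∧ (x : EReal) < b i}

noncomputable def truncSum {k : ℕ} (a b : Fin k → EReal) (s x : ℝ) : ℝ :=
  ∑ i, (stdPhiE (b i) x s - stdPhiE (a i) x s)

noncomputable def condPDF {k : ℕ} (a b : Fin k → EReal) (σ τ μ x : ℝ) : ℝ :=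
  (1 / σ) * stdphi ((x - μ) / σ) * truncSum a b τ x
    / truncSum a b (Real.sqrt (σ ^ 2 + τ ^ 2)) μ

noncomputable def Fmu {k : ℕ} (a b : Fin k → EReal) (σ τ μ x : ℝ) : ℝ :=
  ∫ u in Iic x, condPDF a b σ τ μ u

/-- `G_μ(x,v) = Φ((x - (ρ²μ + (1-ρ²)v))/(σρ))` with `ρ² = τ²/(σ²+τ²)`. -/
noncomputable def Gfun (σ τ μ x v : ℝ) : ℝ :=
  stdPhi ((x - (τ ^ 2 / (σ ^ 2 + τ ^ 2) * μ + (1 - τ ^ 2 / (σ ^ 2 + τ ^ 2)) * v)) /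
    (σ * Real.sqrt (τ ^ 2 / (σ ^ 2 + τ ^ 2))))

/-- `G_μ(x,v)` for an extended-real `v`, with the natural conventions at `±∞`. -/
noncomputable def GfunE (σ τ μ x : ℝ) (c : EReal) : ℝ :=
  if c = ⊤ then 0 else if c = ⊥ then 1 else Gfun σ τ μ x c.toReal

/-- `h(v)` from Lemma `le_dmu_formula`. -/
noncomputable def hfun {k : ℕ} (a b : Fin k → EReal) (σ τ μ v : ℝ) : ℝ :=
  (1 / Real.sqrt (σ ^ 2 + τ ^ 2)) * stdphi ((v - μ) / Real.sqrt (σ ^ 2 + τ ^ 2)) /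
    truncSum a b (Real.sqrt (σ ^ 2 + τ ^ 2)) μ

/-- `h(v)` for an extended-real `v`, with the convention `φ(±∞) = 0`. -/
noncomputable def hfunE {k : ℕ} (a b : Fin k → EReal) (σ τ μ : ℝ) (c : EReal) : ℝ :=
  if c = ⊤ then 0 else if c = ⊥ then 0 else hfun a b σ τ μ c.toReal

/-- `l(x,v)` from Lemma `le_dens_dx`. -/
noncomputable def lfun {k : ℕ} (a b : Fin k → EReal) (τ x v : ℝ) : ℝ :=
  (1 / τ) * stdphi ((v - x) / τ) / truncSum a b τ x

/-- `l(x,v)` for an extended-real `v`, with the convention `φ(±∞) = 0`. -/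
noncomputable def lfunE {k : ℕ} (a b : Fin k → EReal) (τ x : ℝ) (c : EReal) : ℝ :=
  if c = ⊤ then 0 else if c = ⊥ then 0 else lfun a b τ x c.toReal

/-- The function `B_μ(x)` from the proof of Proposition 1. -/
noncomputable def Bfun {k : ℕ} (a b : Fin k → EReal) (σ τ μ x : ℝ) : ℝ :=
  Real.sqrt (τ ^ 2 / (σ ^ 2 + τ ^ 2)) / σ * stdphi (stdPhiInv (Fmu a b σ τ μ x))
    - condPDF a b σ τ μ x
    + ∑ i, (hfunE a b σ τ μ (b i) * (Fmu a b σ τ μ x - GfunE σ τ μ x (b i))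
        - hfunE a b σ τ μ (a i) * (Fmu a b σ τ μ x - GfunE σ τ μ x (a i)))


section Aux

lemma stdphi_pos (x : ℝ) : 0 < stdphi x := by
  unfold stdphi
  have h2 : 0 < Real.sqrt (2 * Real.pi) := Real.sqrt_pos.2 (by positivity)
  positivity

lemma continuous_stdphi : Continuous stdphi := by
  unfold stdphi
  exact (Real.continuous_exp.comp (by continuity)).div_const _

lemma integrable_stdphi : Integrable stdphi := by
  have h : Integrable (fun x : ℝ => Real.exp (-(1/2 : ℝ) * x ^ 2)) :=
    integrable_exp_neg_mul_sq (by norm_num)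
  have he : stdphi = fun x => Real.exp (-(1/2 : ℝ) * x ^ 2) * (Real.sqrt (2 * Real.pi))⁻¹ := by
    funext x
    unfold stdphi
    rw [div_eq_mul_inv]
    congr 2
    ring
  rw [he]
  exact h.mul_const _

lemma integral_stdphi : ∫ x, stdphi x = 1 := by
  have he : stdphi = fun x => Real.exp (-(1/2 : ℝ) * x ^ 2) * (Real.sqrt (2 * Real.pi))⁻¹ := by
    funext x; unfold stdphi; rw [div_eq_mul_inv]; congr 2; ring
  have h : ∫ x : ℝ, Real.exp (-(1/2 : ℝ) * x ^ 2) = Real.sqrt (Real.pi / (1/2)) :=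
    integral_gaussian (1/2)
  rw [he, MeasureTheory.integral_mul_const, h]
  have : Real.pi / (1/2) = 2 * Real.pi := by ring
  rw [this]
  have h2 : Real.sqrt (2 * Real.pi) ≠ 0 := ne_of_gt (Real.sqrt_pos.2 (by positivity))
  field_simp

lemma hasDerivAt_stdPhi (x : ℝ) : HasDerivAt stdPhi (stdphi x) x := by
  have key : stdPhi = fun y => stdPhi 0 + ∫ t in (0:ℝ)..y, stdphi t := by
    funext y
    have := intervalIntegral.integral_Iic_sub_Iic
      (integrable_stdphi.integrableOn (s := Iic 0)) (integrable_stdphi.integrableOn (s := Iic y))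
    unfold stdPhi
    linarith
  rw [key]
  exact ((continuous_stdphi.integral_hasStrictDerivAt 0 x).hasDerivAt).const_add _

lemma stdPhi_pos (x : ℝ) : 0 < stdPhi x := by
  unfold stdPhi
  rw [MeasureTheory.setIntegral_pos_iff_support_of_nonneg_ae
    (Filter.Eventually.of_forall fun t => (stdphi_pos t).le) integrable_stdphi.integrableOn]
  have hs : Function.support stdphi = Set.univ := by
    ext t; simp [Function.support, (stdphi_pos t).ne']
  rw [hs, Set.univ_inter]
  simp [Real.volume_Iic]

lemma stdPhi_lt_one (x : ℝ) : stdPhi x < 1 := by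
  have h := MeasureTheory.integral_add_compl (measurableSet_Iic (a := x)) integrable_stdphi
  rw [integral_stdphi] at h
  have hpos : 0 < ∫ t in (Iic x)ᶜ, stdphi t := by
    rw [MeasureTheory.setIntegral_pos_iff_support_of_nonneg_ae
      (Filter.Eventually.of_forall fun t => (stdphi_pos t).le) integrable_stdphi.integrableOn]
    have hs : Function.support stdphi = Set.univ := by
      ext t; simp [Function.support, (stdphi_pos t).ne']
    rw [hs, Set.univ_inter, Set.compl_Iic]
    simp [Real.volume_Ioi]
  unfold stdPhi
  linarith

lemma stdPhi_strictMono : StrictMono stdPhi := by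
  intro u v huv
  have h := intervalIntegral.integral_Iic_sub_Iic
    (integrable_stdphi.integrableOn (s := Iic u)) (integrable_stdphi.integrableOn (s := Iic v))
  have hpos : 0 < ∫ t in u..v, stdphi t :=
    intervalIntegral.intervalIntegral_pos_of_pos
      (integrable_stdphi.intervalIntegrable) stdphi_pos huv
  unfold stdPhi
  linarith

lemma stdPhiE_lt_stdPhiE {c d : EReal} (h : c < d) (x s : ℝ) (hs : 0 < s) :
    stdPhiE c x s < stdPhiE d x s := by
  induction c using EReal.rec with
  | bot =>
    induction d using EReal.rec with
    | bot => exact absurd h (lt_irrefl _)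
    | coe r => simpa [stdPhiE] using stdPhi_pos ((r - x) / s)
    | top => simp [stdPhiE]
  | coe r =>
    induction d using EReal.rec with
    | bot => exact absurd h (by simp)
    | coe r' =>
      have hrr : r < r' := by exact_mod_cast h
      simp only [stdPhiE, if_neg (EReal.coe_ne_top _), if_neg (EReal.coe_ne_bot _),
        EReal.toReal_coe]
      exact stdPhi_strictMono (by gcongr)
    | top =>
      simp only [stdPhiE, if_neg (EReal.coe_ne_top _), if_neg (EReal.coe_ne_bot _), if_pos rfl,
        EReal.toReal_coe]
      exact stdPhi_lt_one _
  | top => exact absurd h (by simp)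

lemma truncSum_pos {k : ℕ} (a b : Fin (k + 1) → EReal) (hab : truncOrdered a b)
    (s x : ℝ) (hs : 0 < s) : 0 < truncSum a b s x := by
  unfold truncSum
  apply Finset.sum_pos
  · intro i _
    have := stdPhiE_lt_stdPhiE (hab.1 i) x s hs
    linarith
  · exact Finset.univ_nonempty

/-- derivative of `stdPhiE c · s` -/
noncomputable def dE (c : EReal) (s x : ℝ) : ℝ :=
  if c = ⊤ then 0 else if c = ⊥ then 0 else -(1 / s) * stdphi ((c.toReal - x) / s)

lemma hasDerivAt_stdPhiE (c : EReal) (s : ℝ) (hs : s ≠ 0) (x : ℝ) :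
    HasDerivAt (fun y => stdPhiE c y s) (dE c s x) x := by
  induction c using EReal.rec with
  | bot => simpa [stdPhiE, dE] using hasDerivAt_const x (0 : ℝ)
  | top => simpa [stdPhiE, dE] using hasDerivAt_const x (1 : ℝ)
  | coe r =>
    have hinner : HasDerivAt (fun y : ℝ => (r - y) / s) (-1 / s) x := by
      simpa using ((hasDerivAt_const x r).sub (hasDerivAt_id x)).div_const s
    have := (hasDerivAt_stdPhi ((r - x) / s)).comp x hinner
    simp only [stdPhiE, dE, if_neg (EReal.coe_ne_top _), if_neg (EReal.coe_ne_bot _),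
      EReal.toReal_coe]
    refine this.congr_deriv ?_
    ring

lemma hasDerivAt_truncSum {k : ℕ} (a b : Fin k → EReal) (s : ℝ) (hs : s ≠ 0) (x : ℝ) :
    HasDerivAt (fun y => truncSum a b s y) (∑ i, (dE (b i) s x - dE (a i) s x)) x := by
  unfold truncSum
  exact HasDerivAt.fun_sum fun i _ =>
    (hasDerivAt_stdPhiE (b i) s hs x).sub (hasDerivAt_stdPhiE (a i) s hs x)

end Aux

lemma hasDerivAt_stdphi (x : ℝ) : HasDerivAt stdphi (-x * stdphi x) x := by
  have h1 : HasDerivAt (fun y : ℝ => -(y ^ 2) / 2) (-x) x := by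
    have h := ((hasDerivAt_pow 2 x).neg).div_const 2
    refine h.congr_deriv ?_
    push_cast
    ring
  have h2 := h1.exp.div_const (Real.sqrt (2 * Real.pi))
  unfold stdphi
  refine h2.congr_deriv ?_
  ring

/-- Lemma (`le_dens_dx`): `∂f_μ(x)/∂x = -((x-μ)/σ²) f_μ(x) - f_μ(x) ∑ᵢ (l(x,bᵢ) - l(x,aᵢ))`. -/
theorem stmt17 {k : ℕ} (a b : Fin (k + 1) → EReal) (hab : truncOrdered a b)
    (σ τ : ℝ) (hσ : 0 < σ) (hτ : 0 < τ) (x μ : ℝ) :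
    HasDerivAt (fun y => condPDF a b σ τ μ y)
      (-((x - μ) / σ ^ 2) * condPDF a b σ τ μ x
        - condPDF a b σ τ μ x * ∑ i, (lfunE a b τ x (b i) - lfunE a b τ x (a i))) x := by
  have hτ' : τ ≠ 0 := ne_of_gt hτ
  have hσ' : σ ≠ 0 := ne_of_gt hσ
  have hTpos : 0 < truncSum a b τ x := truncSum_pos a b hab τ x hτ
  have hinner : HasDerivAt (fun y : ℝ => (y - μ) / σ) (1 / σ) x := by
    simpa using ((hasDerivAt_id x).sub (hasDerivAt_const x μ)).div_const σ
  have hg : HasDerivAt (fun y => (1 / σ) * stdphi ((y - μ) / σ))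
      (-((x - μ) / σ ^ 2) * ((1 / σ) * stdphi ((x - μ) / σ))) x := by
    have h := ((hasDerivAt_stdphi ((x - μ) / σ)).comp x hinner).const_mul (1 / σ)
    refine h.congr_deriv ?_
    field_simp
  have hT := hasDerivAt_truncSum a b τ hτ' x
  have hmain := (hg.mul hT).div_const (truncSum a b (Real.sqrt (σ ^ 2 + τ ^ 2)) μ)
  have hfn : (fun y => condPDF a b σ τ μ y)
      = fun y => (1 / σ) * stdphi ((y - μ) / σ) * truncSum a b τ y
          / truncSum a b (Real.sqrt (σ ^ 2 + τ ^ 2)) μ := rfl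
  have key : ∀ c : EReal, truncSum a b τ x * lfunE a b τ x c = -dE c τ x := by
    intro c
    induction c using EReal.rec with
    | bot => simp [lfunE, dE]
    | top => simp [lfunE, dE]
    | coe r =>
      simp only [lfunE, dE, lfun, if_neg (EReal.coe_ne_top _), if_neg (EReal.coe_ne_bot _),
        EReal.toReal_coe]
      rw [mul_comm, div_mul_cancel₀ _ (ne_of_gt hTpos)]
      ring
  have hTL : truncSum a b τ x * ∑ i, (lfunE a b τ x (b i) - lfunE a b τ x (a i))
      = -∑ i, (dE (b i) τ x - dE (a i) τ x) := by
    rw [Finset.mul_sum, ← Finset.sum_neg_distrib]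
    refine Finset.sum_congr rfl fun i _ => ?_
    rw [mul_sub, key, key]
    ring
  have hD : (∑ i, (dE (b i) τ x - dE (a i) τ x))
      = -(truncSum a b τ x * ∑ i, (lfunE a b τ x (b i) - lfunE a b τ x (a i))) := by
    linarith [hTL]
  have hval : -((x - μ) / σ ^ 2) * condPDF a b σ τ μ x
        - condPDF a b σ τ μ x * ∑ i, (lfunE a b τ x (b i) - lfunE a b τ x (a i))
      = (-((x - μ) / σ ^ 2) * ((1 / σ) * stdphi ((x - μ) / σ)) * truncSum a b τ x
          + (1 / σ) * stdphi ((x - μ) / σ) * ∑ i, (dE (b i) τ x - dE (a i) τ x))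
        / truncSum a b (Real.sqrt (σ ^ 2 + τ ^ 2)) μ := by
    rw [hD]
    simp only [condPDF]
    ring
  rw [hfn, hval]
  exact hmain
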